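/- For any Gallai r-coloring F of E(K_n) and 2 ≤ s ≤ r, the product over all s-element subsets S of the color set R of g(F,S) is at least n^{C(r-2, s-2)}. -/

import Mathlib

/-- `F` has no rainbow triangle. -/
def IsRainbowFree {V C : Type*} (F : V → V → C) : Prop :=
  ∀ u v w : V, u ≠ v → u ≠ w → v ≠ w →
    F u v = F u w ∨ F u v = F v w ∨ F u w = F v w

open Classical in
/-- `maxSub F S` is the size of the largest vertex set all of whose internal
edges have colors in `S`. -/
noncomputable def maxSub {m r : ℕ} (F : Fin m → Fin m → Fin r)
    (S : Finset (Fin r)) : ℕ :=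
  ((Finset.univ : Finset (Fin m)).powerset.filter
    fun Z => ∀ u ∈ Z, ∀ v ∈ Z, u ≠ v → F u v ∈ S).sup Finset.card

open Finset NNReal

lemma mahler2 {ι : Type*} (A : Finset ι) (K : ℕ) (hK : 1 ≤ K) (hA : A.card = K)
    (x y : ι → ℝ≥0) (hx : ∀ i ∈ A, x i ≠ 0) (hy : ∀ i ∈ A, y i ≠ 0) :
    ((∏ i ∈ A, x i) ^ ((K : ℝ)⁻¹) + (∏ i ∈ A, y i) ^ ((K : ℝ)⁻¹)) ^ K
      ≤ ∏ i ∈ A, (x i + y i) := by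
  have hKR : (K : ℝ) ≠ 0 := by positivity
  set P := ∏ i ∈ A, x i with hP
  set Q := ∏ i ∈ A, y i with hQ
  have hPne : P ≠ 0 := Finset.prod_ne_zero_iff.2 hx
  have hQne : Q ≠ 0 := Finset.prod_ne_zero_iff.2 hy
  set X := P ^ ((K : ℝ)⁻¹) with hX
  set Y := Q ^ ((K : ℝ)⁻¹) with hY
  have hXne : X ≠ 0 := by
    simp [hX, NNReal.rpow_eq_zero_iff, hPne]
  have hYne : Y ≠ 0 := by
    simp [hY, NNReal.rpow_eq_zero_iff, hQne]
  have hTne : X + Y ≠ 0 := by simp [hXne]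
  have hXK : X ^ K = P := by
    rw [hX, ← NNReal.rpow_natCast (P ^ ((K:ℝ)⁻¹)) K, ← NNReal.rpow_mul,
      inv_mul_cancel₀ hKR, NNReal.rpow_one]
  have hYK : Y ^ K = Q := by
    rw [hY, ← NNReal.rpow_natCast (Q ^ ((K:ℝ)⁻¹)) K, ← NNReal.rpow_mul,
      inv_mul_cancel₀ hKR, NNReal.rpow_one]
  have hwsum : X / (X + Y) + Y / (X + Y) = 1 := by
    rw [← add_div, div_self hTne]
  -- pointwise AM-GM
  have key : ∀ i ∈ A, (x i / X) ^ ((X / (X + Y) : ℝ≥0) : ℝ) *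
      (y i / Y) ^ ((Y / (X + Y) : ℝ≥0) : ℝ) ≤ (x i + y i) / (X + Y) := by
    intro i _
    have h := NNReal.geom_mean_le_arith_mean2_weighted (X / (X + Y)) (Y / (X + Y))
      (x i / X) (y i / Y) hwsum
    calc _ ≤ X / (X + Y) * (x i / X) + Y / (X + Y) * (y i / Y) := h
      _ = (x i + y i) / (X + Y) := by
          rw [div_mul_div_comm, div_mul_div_comm, mul_comm X (x i), mul_comm Y (y i),
            mul_div_mul_right _ _ hXne, mul_div_mul_right _ _ hYne, ← add_div]
  have hprod := Finset.prod_le_prod (fun i _ => zero_le) key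
  have hr : ∏ i ∈ A, (x i + y i) / (X + Y) = (∏ i ∈ A, (x i + y i)) / (X + Y) ^ K := by
    rw [Finset.prod_div_distrib, Finset.prod_const, hA]
  rw [hr, Finset.prod_mul_distrib, NNReal.finset_prod_rpow, NNReal.finset_prod_rpow,
    Finset.prod_div_distrib, Finset.prod_div_distrib, Finset.prod_const, Finset.prod_const,
    hA, hXK, hYK, ← hP, ← hQ, div_self hPne, div_self hQne, NNReal.one_rpow, NNReal.one_rpow,
    one_mul] at hprod
  have h2 := (le_div_iff₀ (pos_iff_ne_zero.2 (pow_ne_zero _ hTne))).1 hprod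
  rwa [one_mul] at h2

lemma core_numeric {ι : Type*} [DecidableEq ι] (T A : Finset ι) (hAT : A ⊆ T) (K p q : ℕ) (hK : 1 ≤ K)
    (hA : A.card = K) (x y z : ι → ℕ)
    (hx1 : ∀ i ∈ T, 1 ≤ x i) (hy1 : ∀ i ∈ T, 1 ≤ y i)
    (hzA : ∀ i ∈ A, x i + y i ≤ z i)
    (hzX : ∀ i ∈ T, i ∉ A → x i ≤ z i) (hzY : ∀ i ∈ T, i ∉ A → y i ≤ z i)
    (hp : p ^ K ≤ ∏ i ∈ T, x i) (hq : q ^ K ≤ ∏ i ∈ T, y i) :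
    (p + q) ^ K ≤ ∏ i ∈ T, z i := by
  have hKR : (K : ℝ) ≠ 0 := by positivity
  -- move to ℝ≥0
  rw [← Nat.cast_le (α := ℝ≥0)] at hp hq ⊢
  push_cast at hp hq ⊢
  set X := (∏ i ∈ A, ((x i : ℕ) : ℝ≥0)) ^ ((K : ℝ)⁻¹) with hX
  set Y := (∏ i ∈ A, ((y i : ℕ) : ℝ≥0)) ^ ((K : ℝ)⁻¹) with hY
  set m := ∏ i ∈ T \ A, ((z i : ℕ) : ℝ≥0) with hm
  have hxne : ∀ i ∈ A, ((x i : ℕ) : ℝ≥0) ≠ 0 := fun i hi => by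
    have := hx1 i (hAT hi); simp; omega
  have hyne : ∀ i ∈ A, ((y i : ℕ) : ℝ≥0) ≠ 0 := fun i hi => by
    have := hy1 i (hAT hi); simp; omega
  have hsplit : ∀ w : ι → ℝ≥0, (∏ i ∈ T \ A, w i) * ∏ i ∈ A, w i = ∏ i ∈ T, w i :=
    fun w => Finset.prod_sdiff hAT
  have hmK : (m ^ ((K : ℝ)⁻¹)) ^ K = m := by
    rw [← NNReal.rpow_natCast (m ^ ((K:ℝ)⁻¹)) K, ← NNReal.rpow_mul,
      inv_mul_cancel₀ hKR, NNReal.rpow_one]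
  -- p ≤ X * m^{1/K}
  have hpX : (p : ℝ≥0) ≤ X * m ^ ((K : ℝ)⁻¹) := by
    have h1 : (∏ i ∈ T \ A, ((x i : ℕ) : ℝ≥0)) ≤ m := by
      apply Finset.prod_le_prod (fun _ _ => zero_le)
      intro i hi
      rcases Finset.mem_sdiff.1 hi with ⟨hiT, hiA⟩
      exact_mod_cast hzX i hiT hiA
    have h2 : (p : ℝ≥0) ^ K ≤ (∏ i ∈ A, ((x i : ℕ) : ℝ≥0)) * m := by
      calc (p:ℝ≥0) ^ K ≤ ∏ i ∈ T, ((x i : ℕ) : ℝ≥0) := hp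
        _ = (∏ i ∈ T \ A, ((x i : ℕ) : ℝ≥0)) * ∏ i ∈ A, ((x i : ℕ) : ℝ≥0) := (hsplit (fun i => ((x i : ℕ) : ℝ≥0))).symm
        _ ≤ m * ∏ i ∈ A, ((x i : ℕ) : ℝ≥0) := mul_le_mul_left h1 _
        _ = (∏ i ∈ A, ((x i : ℕ) : ℝ≥0)) * m := mul_comm _ _
    have h3 : ((p : ℝ≥0) ^ K) ^ ((K : ℝ)⁻¹) ≤ ((∏ i ∈ A, ((x i : ℕ) : ℝ≥0)) * m) ^ ((K : ℝ)⁻¹) :=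
      NNReal.rpow_le_rpow h2 (by positivity)
    rwa [← NNReal.rpow_natCast (p : ℝ≥0) K, ← NNReal.rpow_mul,
      mul_inv_cancel₀ hKR, NNReal.rpow_one, NNReal.mul_rpow] at h3
  have hqY : (q : ℝ≥0) ≤ Y * m ^ ((K : ℝ)⁻¹) := by
    have h1 : (∏ i ∈ T \ A, ((y i : ℕ) : ℝ≥0)) ≤ m := by
      apply Finset.prod_le_prod (fun _ _ => zero_le)
      intro i hi
      rcases Finset.mem_sdiff.1 hi with ⟨hiT, hiA⟩
      exact_mod_cast hzY i hiT hiA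
    have h2 : (q : ℝ≥0) ^ K ≤ (∏ i ∈ A, ((y i : ℕ) : ℝ≥0)) * m := by
      calc (q:ℝ≥0) ^ K ≤ ∏ i ∈ T, ((y i : ℕ) : ℝ≥0) := hq
        _ = (∏ i ∈ T \ A, ((y i : ℕ) : ℝ≥0)) * ∏ i ∈ A, ((y i : ℕ) : ℝ≥0) := (hsplit (fun i => ((y i : ℕ) : ℝ≥0))).symm
        _ ≤ m * ∏ i ∈ A, ((y i : ℕ) : ℝ≥0) := mul_le_mul_left h1 _
        _ = (∏ i ∈ A, ((y i : ℕ) : ℝ≥0)) * m := mul_comm _ _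
    have h3 : ((q : ℝ≥0) ^ K) ^ ((K : ℝ)⁻¹) ≤ ((∏ i ∈ A, ((y i : ℕ) : ℝ≥0)) * m) ^ ((K : ℝ)⁻¹) :=
      NNReal.rpow_le_rpow h2 (by positivity)
    rwa [← NNReal.rpow_natCast (q : ℝ≥0) K, ← NNReal.rpow_mul,
      mul_inv_cancel₀ hKR, NNReal.rpow_one, NNReal.mul_rpow] at h3
  calc ((p : ℝ≥0) + q) ^ K ≤ (X * m ^ ((K:ℝ)⁻¹) + Y * m ^ ((K:ℝ)⁻¹)) ^ K := by
        exact pow_le_pow_left₀ zero_le (add_le_add hpX hqY) K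
    _ = (X + Y) ^ K * m := by
        rw [← add_mul, mul_pow, hmK]
    _ ≤ (∏ i ∈ A, (((x i : ℕ) : ℝ≥0) + ((y i : ℕ) : ℝ≥0))) * m :=
        mul_le_mul_left (mahler2 A K hK hA _ _ hxne hyne) m
    _ ≤ (∏ i ∈ A, ((z i : ℕ) : ℝ≥0)) * m := by
        apply mul_le_mul_left
        apply Finset.prod_le_prod (fun _ _ => zero_le)
        intro i hi
        exact_mod_cast hzA i hi
    _ = ∏ i ∈ T, ((z i : ℕ) : ℝ≥0) := by rw [mul_comm]; exact hsplit (fun i => ((z i : ℕ) : ℝ≥0))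

section Structure

variable {m r : ℕ}

/-- one step in the "colors outside {a,b}" graph inside `V'` -/
def GStep (F : Fin m → Fin m → Fin r) (V' : Finset (Fin m)) (a b : Fin r)
    (x y : Fin m) : Prop :=
  x ∈ V' ∧ y ∈ V' ∧ x ≠ y ∧ F x y ≠ a ∧ F x y ≠ b

/-- connectivity in the "colors outside {a,b}" graph inside `V'` -/
def GConn (F : Fin m → Fin m → Fin r) (V' : Finset (Fin m)) (a b : Fin r) :
    Fin m → Fin m → Prop :=
  Relation.ReflTransGen (GStep F V' a b)

variable {F : Fin m → Fin m → Fin r}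

lemma gstep_symm (hsym : ∀ u v, F u v = F v u) {V' : Finset (Fin m)} {a b : Fin r} :
    Symmetric (GStep F V' a b) := by
  rintro x y ⟨h1, h2, h3, h4, h5⟩
  exact ⟨h2, h1, h3.symm, by rwa [hsym], by rwa [hsym]⟩

lemma gconn_symm (hsym : ∀ u v, F u v = F v u) {V' : Finset (Fin m)} {a b : Fin r} {x y : Fin m}
    (h : GConn F V' a b x y) : GConn F V' a b y x :=
  by haveI : Std.Symm (GStep F V' a b) := ⟨fun _ _ h => gstep_symm hsym h⟩; exact Std.Symm.symm (r := Relation.ReflTransGen (GStep F V' a b)) _ _ h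

lemma gconn_mem_right {V' : Finset (Fin m)} {a b : Fin r} {x y : Fin m}
    (hx : x ∈ V') (h : GConn F V' a b x y) : y ∈ V' := by
  induction h with
  | refl => exact hx
  | tail _ hstep _ => exact hstep.2.1

lemma gconn_cross {V' : Finset (Fin m)} {a b : Fin r} {x y : Fin m}
    (hx : x ∈ V') (hy : y ∈ V') (hxy : x ≠ y) (h : ¬ GConn F V' a b x y) :
    F x y = a ∨ F x y = b := by
  by_contra hcon
  push_neg at hcon
  exact h (Relation.ReflTransGen.single ⟨hx, hy, hxy, hcon.1, hcon.2⟩)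

/-- classes of `GConn` are modules : a vertex outside a class sees it
monochromatically -/
lemma gconn_module (hsym : ∀ u v, F u v = F v u) (hG : IsRainbowFree F) {V' : Finset (Fin m)} {a b : Fin r} {z x y : Fin m}
    (hz : z ∈ V') (hx : x ∈ V') (hzx : ¬ GConn F V' a b z x)
    (hxy : GConn F V' a b x y) : F z x = F z y := by
  induction hxy with
  | refl => rfl
  | @tail c y hxc hstep ih =>
    have hzc : ¬ GConn F V' a b z c := by
      intro hcon
      exact hzx (hcon.trans (gconn_symm hsym hxc))
    have ihv : F z x = F z c := ih
    have hcV : c ∈ V' := hstep.1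
    have hyV : y ∈ V' := hstep.2.1
    have hzcne : z ≠ c := by rintro rfl; exact hzc .refl
    have hzy : ¬ GConn F V' a b z y := by
      intro hcon
      exact hzc (hcon.trans (Relation.ReflTransGen.single (gstep_symm hsym hstep)))
    have hzyne : z ≠ y := by rintro rfl; exact hzy .refl
    have h1 := gconn_cross hz hcV hzcne hzc
    have h2 := gconn_cross hz hyV hzyne hzy
    rcases hG z c y hzcne hzyne hstep.2.2.1 with h | h | h
    · rw [ihv, h]
    · rcases h1 with h1 | h1 <;> rw [h1] at h <;>
        [exact absurd h.symm hstep.2.2.2.1; exact absurd h.symm hstep.2.2.2.2]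
    · rcases h2 with h2 | h2 <;> rw [h2] at h <;>
        [exact absurd h.symm hstep.2.2.2.1; exact absurd h.symm hstep.2.2.2.2]

end Structure

section BW

variable {m r : ℕ} {F : Fin m → Fin m → Fin r}

theorem gallai_BW (hsym : ∀ u v, F u v = F v u) (hG : IsRainbowFree F)
    (hr : 2 ≤ r) :
    ∀ (N : ℕ) (V : Finset (Fin m)), V.card ≤ N → 2 ≤ V.card →
    ∃ a b : Fin r, a ≠ b ∧ ∃ U : Finset (Fin m), U.Nonempty ∧ U ⊂ V ∧
      ∀ u ∈ U, ∀ w ∈ V \ U, F u w = a ∨ F u w = b := by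
  intro N
  induction N with
  | zero => intro V h0 h2; omega
  | succ N ih =>
    intro V hcard h2
    classical
    by_cases hc2 : V.card = 2
    · -- base case : two vertices
      obtain ⟨u, w, huw, rfl⟩ := Finset.card_eq_two.1 hc2
      have : Nontrivial (Fin r) := Fin.nontrivial_iff_two_le.mpr hr
      obtain ⟨c, hc⟩ := exists_ne (F u w)
      refine ⟨F u w, c, hc.symm.symm ∘ Eq.symm, {u}, Finset.singleton_nonempty u, ?_, ?_⟩
      · rw [Finset.ssubset_iff_of_subset (by simp)]
        exact ⟨w, by simp, by simp [huw.symm]⟩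
      · intro x hx y hy
        simp only [Finset.mem_singleton] at hx
        subst hx
        have : y = w := by
          simp only [Finset.mem_sdiff, Finset.mem_insert, Finset.mem_singleton] at hy
          tauto
        subst this
        exact Or.inl rfl
    · -- main case
      have h3 : 3 ≤ V.card := by omega
      obtain ⟨v, hvV⟩ := Finset.card_pos.1 (by omega : 0 < V.card)
      set V' := V.erase v with hV'def
      have hvV' : v ∉ V' := Finset.notMem_erase v V
      have hV'V : V' ⊆ V := Finset.erase_subset _ _
      have hV'card : V'.card = V.card - 1 := Finset.card_erase_of_mem hvV
      obtain ⟨a, b, hab, U', hU'ne, hU'ss, hcross'⟩ :=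
        ih V' (by omega) (by omega)
      have hU'V' : U' ⊆ V' := hU'ss.subset
      obtain ⟨wst, hwstV', hwstU'⟩ := (Finset.ssubset_iff_of_subset hU'V').1 hU'ss
      obtain ⟨ust, hustU'⟩ := hU'ne
      have hvne : ∀ {x : Fin m}, x ∈ V' → v ≠ x := fun hx h => hvV' (h ▸ hx)
      have hmemV' : ∀ {w : Fin m}, w ∈ V → w ≠ v → w ∈ V' := fun hw hne =>
        Finset.mem_erase.2 ⟨hne, hw⟩
      -- the U' side is closed under GConn
      have hclosed : ∀ x y, GConn F V' a b x y → x ∈ U' → y ∈ U' := by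
        intro x y hxy
        induction hxy with
        | refl => exact id
        | @tail c y hxc hstep ihc =>
          intro hxU'
          have hcU' : c ∈ U' := ihc hxU'
          by_contra hyU'
          have hyW : y ∈ V' \ U' := Finset.mem_sdiff.2 ⟨hstep.2.1, hyU'⟩
          rcases hcross' c hcU' y hyW with h | h
          · exact hstep.2.2.2.1 h
          · exact hstep.2.2.2.2 h
      have noconn : ∀ x ∈ U', ∀ y ∈ V' \ U', ¬ GConn F V' a b x y := by
        intro x hx y hy hcon
        exact (Finset.mem_sdiff.1 hy).2 (hclosed x y hcon hx)
      have hwstW : wst ∈ V' \ U' := Finset.mem_sdiff.2 ⟨hwstV', hwstU'⟩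
      by_cases hcase : ∃ x1, x1 ∈ V' ∧ ∃ x1', x1' ∈ V' ∧
          GConn F V' a b x1 x1' ∧ F v x1 ≠ F v x1'
      · -- CASE 2 : some class sees at least two colors from v
        obtain ⟨x1, hx1, x1', hx1', hconn, hpq⟩ := hcase
        -- triangle helper
        have trig : ∀ y ∈ V', ¬ GConn F V' a b x1 y → ∀ x ∈ V',
            GConn F V' a b x1 x → F v x ≠ F x1 y →
            (F v y = F v x ∨ F v y = F x1 y) := by
          intro y hy hncy x hx hcx hne
          have h1 : ¬ GConn F V' a b y x1 := fun h => hncy (gconn_symm hsym h)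
          have hxy_eq : F x y = F x1 y := by
            have h2 := gconn_module hsym hG hy hx1 h1 hcx
            rw [hsym y x1, hsym y x] at h2
            exact h2.symm
          have hx1y : x1 ≠ y := fun h => hncy (h ▸ Relation.ReflTransGen.refl)
          have hxyne : x ≠ y := by
            rintro rfl
            exact hncy hcx
          rcases hG v x y (hvne hx) (hvne hy) hxyne with h | h | h
          · exact Or.inl h.symm
          · exact absurd (h.trans hxy_eq) hne
          · exact Or.inr (h.trans hxy_eq)
        have forceρ : ∀ y ∈ V', ¬ GConn F V' a b x1 y → ∀ x ∈ V', ∀ x' ∈ V',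
            GConn F V' a b x1 x → GConn F V' a b x1 x' → F v x ≠ F v x' →
            F v x ≠ F x1 y → F v x' ≠ F x1 y → F v y = F x1 y := by
          intro y hy hncy x hx x' hx' hcx hcx' hne hne1 hne2
          rcases trig y hy hncy x hx hcx hne1 with h | h
          · rcases trig y hy hncy x' hx' hcx' hne2 with h' | h'
            · exact absurd (h.symm.trans h') hne
            · exact h'
          · exact h
        -- shared final construction
        have main2 : (∀ y ∈ V', ¬ GConn F V' a b x1 y → F v y = F x1 y) →
            ∃ a' b' : Fin r, a' ≠ b' ∧ ∃ U : Finset (Fin m), U.Nonempty ∧ U ⊂ V ∧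
              ∀ u ∈ U, ∀ w ∈ V \ U, F u w = a' ∨ F u w = b' := by
          intro hforce
          refine ⟨a, b, hab, insert v (V'.filter fun x => GConn F V' a b x1 x),
            Finset.insert_nonempty _ _, ?_, ?_⟩
          · rw [Finset.ssubset_iff_of_subset]
            · -- find an element outside
              have : ∃ y, y ∈ V' ∧ ¬ GConn F V' a b x1 y := by
                by_cases hcu : GConn F V' a b x1 ust
                · refine ⟨wst, hwstV', fun hcw => ?_⟩
                  exact noconn ust hustU' wst hwstW ((gconn_symm hsym hcu).trans hcw)
                · exact ⟨ust, hU'V' hustU', hcu⟩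
              obtain ⟨y, hyV', hyc⟩ := this
              refine ⟨y, hV'V hyV', ?_⟩
              simp only [Finset.mem_insert, Finset.mem_filter, not_or]
              exact ⟨(hvne hyV').symm, fun h => hyc h.2⟩
            · intro x hx
              rcases Finset.mem_insert.1 hx with rfl | hx
              · exact hvV
              · exact hV'V (Finset.mem_filter.1 hx).1
          · intro u hu w hw
            rw [Finset.mem_sdiff] at hw
            have hwv : w ≠ v := by
              exact fun h => hw.2 (Finset.mem_insert.2 (Or.inl h))
            have hwV' : w ∈ V' := hmemV' hw.1 hwv
            have hncw : ¬ GConn F V' a b x1 w := fun hc =>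
              hw.2 (Finset.mem_insert.2 (Or.inr (Finset.mem_filter.2 ⟨hwV', hc⟩)))
            have hρab : F x1 w = a ∨ F x1 w = b :=
              gconn_cross hx1 hwV' (fun h => hncw (h ▸ Relation.ReflTransGen.refl)) hncw
            rcases Finset.mem_insert.1 hu with rfl | hu
            · rw [hforce w hwV' hncw]; exact hρab
            · obtain ⟨huV', hcu⟩ := Finset.mem_filter.1 hu
              have hnuw : ¬ GConn F V' a b u w := fun hc =>
                hncw (hcu.trans hc)
              have hune : u ≠ w := by
                rintro rfl
                exact hncw hcu
              exact gconn_cross huV' hwV' hune hnuw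
        by_cases h3c : ∃ x'', x'' ∈ V' ∧ GConn F V' a b x1 x'' ∧
            F v x'' ≠ F v x1 ∧ F v x'' ≠ F v x1'
        · -- CASE 2-III : three colors on the class
          obtain ⟨x'', hx''V, hcx'', hw1, hw2⟩ := h3c
          apply main2
          intro y hy hncy
          by_cases hρp : F x1 y = F v x1
          · exact forceρ y hy hncy x1' hx1' x'' hx''V hconn hcx''
              (fun h => hw2 h.symm) (by rw [hρp]; exact fun h => hpq h.symm)
              (by rw [hρp]; exact hw1)
          · by_cases hρq : F x1 y = F v x1'
            · exact forceρ y hy hncy x1 hx1 x'' hx''V Relation.ReflTransGen.refl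
                hcx'' (fun h => hw1 h.symm) (by rw [hρq]; exact hpq)
                (by rw [hρq]; exact hw2)
            · exact forceρ y hy hncy x1 hx1 x1' hx1' Relation.ReflTransGen.refl
                hconn hpq (fun h => hρp h.symm) (fun h => hρq h.symm)
        · push_neg at h3c
          have hclass : ∀ x ∈ V', GConn F V' a b x1 x →
              F v x = F v x1 ∨ F v x = F v x1' := by
            intro x hx hcx
            by_cases h : F v x = F v x1
            · exact Or.inl h
            · exact Or.inr (h3c x hx hcx h)
          by_cases h4 : (F v x1 ≠ a ∧ F v x1 ≠ b) ∧ (F v x1' ≠ a ∧ F v x1' ≠ b)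
          · -- CASE 2-IIa : class colors disjoint from {a,b}
            apply main2
            intro y hy hncy
            have hρab : F x1 y = a ∨ F x1 y = b :=
              gconn_cross hx1 hy (fun h => hncy (h ▸ Relation.ReflTransGen.refl)) hncy
            refine forceρ y hy hncy x1 hx1 x1' hx1' Relation.ReflTransGen.refl
              hconn hpq ?_ ?_
            · rcases hρab with h | h <;> rw [h]
              · exact h4.1.1
              · exact h4.1.2
            · rcases hρab with h | h <;> rw [h]
              · exact h4.2.1
              · exact h4.2.2
          · -- CASE 2-IIb
            -- extract e (class color in {a,b}) and d (the other class color)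
            have sub : ∀ e d xe xd, xe ∈ V' → xd ∈ V' → GConn F V' a b x1 xe →
                GConn F V' a b x1 xd → F v xe = e → F v xd = d → e ≠ d →
                (e = a ∨ e = b) →
                (∀ x ∈ V', GConn F V' a b x1 x → F v x = e ∨ F v x = d) →
                ∃ a' b' : Fin r, a' ≠ b' ∧ ∃ U : Finset (Fin m), U.Nonempty ∧
                  U ⊂ V ∧ ∀ u ∈ U, ∀ w ∈ V \ U, F u w = a' ∨ F u w = b' := by
              intro e d xe xd hxe hxd hcxe hcxd hve hvd hed heab hclass2
              set f := if e = a then b else a with hfdef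
              have hef : (e = a ∧ f = b) ∨ (e = b ∧ f = a) := by
                by_cases h : e = a
                · exact Or.inl ⟨h, by rw [hfdef, if_pos h]⟩
                · rcases heab with h' | h'
                  · exact absurd h' h
                  · exact Or.inr ⟨h', by rw [hfdef, if_neg h]⟩
              have hfab : f = a ∨ f = b := by
                rcases hef with ⟨_, h⟩ | ⟨_, h⟩
                · exact Or.inr h
                · exact Or.inl h
              have hefne : e ≠ f := by
                rcases hef with ⟨h1, h2⟩ | ⟨h1, h2⟩
                · rw [h1, h2]; exact hab
                · rw [h1, h2]; exact hab.symm
              have habef : ∀ co : Fin r, (co = a ∨ co = b) → co = e ∨ co = f := by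
                intro co hco
                rcases hef with ⟨h1, h2⟩ | ⟨h1, h2⟩
                · rw [h1, h2]; exact hco
                · rw [h1, h2]; exact hco.symm
              by_cases h5 : d = f
              · -- all colors at v are in {a,b} : take U = {v}
                have hall : ∀ y ∈ V', F v y = a ∨ F v y = b := by
                  intro y hy
                  by_cases hcy : GConn F V' a b x1 y
                  · rcases hclass2 y hy hcy with h | h
                    · rw [h]; exact heab
                    · rw [h, h5]; exact hfab
                  · have hρab : F x1 y = a ∨ F x1 y = b :=
                      gconn_cross hx1 hy
                        (fun h => hcy (h ▸ Relation.ReflTransGen.refl)) hcy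
                    by_cases hne : F v xe = F x1 y
                    · -- e = ρ, use xd with color d = f ≠ e = ρ
                      have : F v xd ≠ F x1 y := by
                        rw [hvd, ← hne, hve]; rw [h5]
                        exact fun h => hefne h.symm
                      rcases trig y hy hcy xd hxd hcxd this with h | h
                      · rw [h, hvd, h5]; exact hfab
                      · rw [h]; exact hρab
                    · rcases trig y hy hcy xe hxe hcxe hne with h | h
                      · rw [h, hve]; exact heab
                      · rw [h]; exact hρab
                refine ⟨a, b, hab, {v}, Finset.singleton_nonempty v, ?_, ?_⟩
                · rw [Finset.ssubset_iff_of_subset (by simpa using hvV)]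
                  exact ⟨wst, hV'V hwstV', by
                    simp only [Finset.mem_singleton]
                    exact (hvne hwstV').symm⟩
                · intro u hu w hw
                  simp only [Finset.mem_singleton] at hu
                  rw [hu]
                  rw [Finset.mem_sdiff] at hw
                  have hwv : w ≠ v := by
                    exact fun h => hw.2 (Finset.mem_singleton.2 h)
                  exact hall w (hmemV' hw.1 hwv)
              · -- d ∉ {a,b}
                have hdf : d ≠ f := h5
                have hdab : d ≠ a ∧ d ≠ b := by
                  rcases hef with ⟨h1, h2⟩ | ⟨h1, h2⟩
                  · exact ⟨fun h => hed (h1.trans h.symm) ,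
                      fun h => hdf (h.trans h2.symm)⟩
                  · exact ⟨fun h => hdf (h.trans h2.symm),
                      fun h => hed (h1.trans h.symm)⟩
                set Y := V'.filter (fun y => ¬ GConn F V' a b x1 y ∧ F x1 y = f)
                  with hYdef
                have hYf : ∀ y ∈ Y, F v y = f := by
                  intro y hy
                  obtain ⟨hyV', hncy, hρf⟩ := Finset.mem_filter.1 hy
                  have := forceρ y hyV' hncy xe hxe xd hxd hcxe hcxd
                    (by rw [hve, hvd]; exact hed)
                    (by rw [hve, hρf]; exact hefne)
                    (by rw [hvd, hρf]; exact hdf)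
                  rw [this, hρf]
                by_cases h6 : Y.Nonempty
                · -- split V \ Y vs Y
                  refine ⟨a, b, hab, V \ Y, ⟨v, Finset.mem_sdiff.2 ⟨hvV, fun h =>
                    hvV' (Finset.mem_filter.1 h).1⟩⟩, ?_, ?_⟩
                  · obtain ⟨y0, hy0⟩ := h6
                    rw [Finset.ssubset_iff_of_subset (Finset.sdiff_subset)]
                    exact ⟨y0, hV'V (Finset.mem_filter.1 hy0).1, fun h =>
                      (Finset.mem_sdiff.1 h).2 hy0⟩
                  · intro u hu w hw
                    have hwY : w ∈ Y := by
                      rw [Finset.sdiff_sdiff_self_left,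
                        Finset.inter_eq_right.2
                          (fun y hy => hV'V (Finset.mem_filter.1 hy).1)] at hw
                      exact hw
                    obtain ⟨hwV', hncw, hρw⟩ := Finset.mem_filter.1 hwY
                    have hvw : F v w = f := hYf w hwY
                    rw [Finset.mem_sdiff] at hu
                    by_cases huv : u = v
                    · subst huv
                      rw [hvw]
                      exact hfab
                    · have huV' : u ∈ V' := hmemV' hu.1 huv
                      by_cases hcu : GConn F V' a b x1 u
                      · have h1 : ¬ GConn F V' a b w x1 := fun h =>
                          hncw (gconn_symm hsym h)
                        have h2 := gconn_module hsym hG hwV' hx1 h1 hcu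
                        rw [hsym w x1, hsym w u] at h2
                        rw [← h2, hρw]
                        exact hfab
                      · have hρu : F x1 u ≠ f := by
                          intro h
                          exact hu.2 (Finset.mem_filter.2 ⟨huV', hcu, h⟩)
                        have hnuw : ¬ GConn F V' a b u w := by
                          intro hcon
                          exact hρu ((gconn_module hsym hG hx1 huV' hcu hcon).trans hρw)
                        have hune : u ≠ w := by
                          rintro rfl; exact hρu hρw
                        exact gconn_cross huV' hwV' hune hnuw
                · -- Y empty : all colors at v are in {e, d}
                  have hall : ∀ y ∈ V', F v y = e ∨ F v y = d := by
                    intro y hy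
                    by_cases hcy : GConn F V' a b x1 y
                    · exact hclass2 y hy hcy
                    · have hρab : F x1 y = a ∨ F x1 y = b :=
                        gconn_cross hx1 hy
                          (fun h => hcy (h ▸ Relation.ReflTransGen.refl)) hcy
                      have hρef := habef _ hρab
                      have hρe : F x1 y = e := by
                        rcases hρef with h | h
                        · exact h
                        · exact absurd (Finset.mem_filter.2 ⟨hy, hcy, h⟩)
                            (fun hh => h6 ⟨y, hh⟩)
                      rcases trig y hy hcy xd hxd hcxd
                        (by rw [hvd, hρe]; exact fun h => hed h.symm) with h | h
                      · rw [h, hvd]; exact Or.inr rfl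
                      · rw [h, hρe]; exact Or.inl rfl
                  refine ⟨e, d, hed, {v}, Finset.singleton_nonempty v, ?_, ?_⟩
                  · rw [Finset.ssubset_iff_of_subset (by simpa using hvV)]
                    exact ⟨wst, hV'V hwstV', by
                      simp only [Finset.mem_singleton]
                      exact (hvne hwstV').symm⟩
                  · intro u hu w hw
                    simp only [Finset.mem_singleton] at hu
                    rw [hu]
                    rw [Finset.mem_sdiff] at hw
                    have hwv : w ≠ v := by
                      exact fun h => hw.2 (Finset.mem_singleton.2 h)
                    exact hall w (hmemV' hw.1 hwv)
            -- now pick e and d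
            by_cases hpa : F v x1 = a ∨ F v x1 = b
            · exact sub (F v x1) (F v x1') x1 x1' hx1 hx1' Relation.ReflTransGen.refl
                hconn rfl rfl hpq hpa hclass
            · have hqa : F v x1' = a ∨ F v x1' = b := by
                by_contra hq
                push_neg at hq
                push_neg at hpa
                exact h4 ⟨hpa, hq⟩
              exact sub (F v x1') (F v x1) x1' x1 hx1' hx1 hconn
                Relation.ReflTransGen.refl rfl rfl hpq.symm hqa
                (fun x hx hcx => (hclass x hx hcx).symm)
      · -- CASE 1 : v is monochromatic on every class
        push_neg at hcase
        have hmono : ∀ x ∈ V', ∀ y ∈ V', GConn F V' a b x y → F v x = F v y :=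
          fun x hx y hy h => hcase x hx y hy h
        by_cases h1 : ∀ x ∈ V', F v x = a ∨ F v x = b
        · refine ⟨a, b, hab, {v}, Finset.singleton_nonempty v, ?_, ?_⟩
          · rw [Finset.ssubset_iff_of_subset (by simpa using hvV)]
            exact ⟨wst, hV'V hwstV', by
              simp only [Finset.mem_singleton]
              exact (hvne hwstV').symm⟩
          · intro u hu w hw
            simp only [Finset.mem_singleton] at hu
            rw [hu]
            rw [Finset.mem_sdiff] at hw
            have hwv : w ≠ v := by
              exact fun h => hw.2 (Finset.mem_singleton.2 h)
            exact h1 w (hmemV' hw.1 hwv)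
        · push_neg at h1
          obtain ⟨x0, hx0, hca, hcb⟩ := h1
          by_cases h2 : ∀ y ∈ V', F v y = F v x0
          · -- all edges at v colored c
            refine ⟨F v x0, if F v x0 = a then b else a, ?_, {v},
              Finset.singleton_nonempty v, ?_, ?_⟩
            · by_cases h : F v x0 = a
              · rw [if_pos h, h]; exact hab
              · rw [if_neg h]; exact hca
            · rw [Finset.ssubset_iff_of_subset (by simpa using hvV)]
              exact ⟨wst, hV'V hwstV', by
                simp only [Finset.mem_singleton]
                exact (hvne hwstV').symm⟩
            · intro u hu w hw
              simp only [Finset.mem_singleton] at hu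
              rw [hu]
              rw [Finset.mem_sdiff] at hw
              have hwv : w ≠ v := by
                exact fun h => hw.2 (Finset.mem_singleton.2 h)
              exact Or.inl (h2 w (hmemV' hw.1 hwv))
          · push_neg at h2
            obtain ⟨y1, hy1, hy1c⟩ := h2
            refine ⟨a, b, hab, insert v (V'.filter fun x => F v x = F v x0),
              Finset.insert_nonempty _ _, ?_, ?_⟩
            · rw [Finset.ssubset_iff_of_subset]
              · refine ⟨y1, hV'V hy1, ?_⟩
                simp only [Finset.mem_insert, Finset.mem_filter, not_or]
                exact ⟨(hvne hy1).symm, fun h => hy1c h.2⟩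
              · intro x hx
                rcases Finset.mem_insert.1 hx with rfl | hx
                · exact hvV
                · exact hV'V (Finset.mem_filter.1 hx).1
            · intro u hu w hw
              rw [Finset.mem_sdiff] at hw
              have hwv : w ≠ v := by
                rintro rfl; exact hw.2 (Finset.mem_insert_self _ _)
              have hwV' : w ∈ V' := hmemV' hw.1 hwv
              have hwc : F v w ≠ F v x0 := fun h =>
                hw.2 (Finset.mem_insert.2 (Or.inr (Finset.mem_filter.2 ⟨hwV', h⟩)))
              have claimA : F v w = a ∨ F v w = b := by
                have hnc : ¬ GConn F V' a b x0 w := fun hcon =>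
                  hwc (hmono x0 hx0 w hwV' hcon).symm
                have hx0w : x0 ≠ w := by
                  rintro rfl; exact hwc rfl
                have hcr := gconn_cross hx0 hwV' hx0w hnc
                rcases hG v x0 w (hvne hx0) (hvne hwV') hx0w with h | h | h
                · exact absurd h.symm hwc
                · rcases hcr with hc | hc <;> rw [hc] at h
                  · exact absurd h hca
                  · exact absurd h hcb
                · rw [h]; exact hcr
              rcases Finset.mem_insert.1 hu with rfl | hu
              · exact claimA
              · obtain ⟨huV', hcu⟩ := Finset.mem_filter.1 hu
                have hnuw : ¬ GConn F V' a b u w := fun hcon =>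
                  hwc (hcu ▸ hmono u huV' w hwV' hcon).symm
                  -- F v u = F v x0, need F v w ≠ F v x0
                have hune : u ≠ w := by
                  rintro rfl
                  exact hwc hcu
                exact gconn_cross huV' hwV' hune hnuw

end BW

open Classical in
noncomputable def gg {m r : ℕ} (F : Fin m → Fin m → Fin r) (V : Finset (Fin m))
    (S : Finset (Fin r)) : ℕ :=
  (V.powerset.filter
    fun Z => ∀ u ∈ Z, ∀ v ∈ Z, u ≠ v → F u v ∈ S).sup Finset.card

lemma maxSub_eq_gg {m r : ℕ} (F : Fin m → Fin m → Fin r) (S : Finset (Fin r)) :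
    maxSub F S = gg F Finset.univ S := rfl

lemma le_gg {m r : ℕ} (F : Fin m → Fin m → Fin r) {V Z : Finset (Fin m)}
    {S : Finset (Fin r)} (hZV : Z ⊆ V)
    (hZ : ∀ u ∈ Z, ∀ v ∈ Z, u ≠ v → F u v ∈ S) : Z.card ≤ gg F V S := by
  classical
  apply Finset.le_sup
  rw [Finset.mem_filter, Finset.mem_powerset]
  exact ⟨hZV, hZ⟩

lemma gg_witness {m r : ℕ} (F : Fin m → Fin m → Fin r) (V : Finset (Fin m))
    (S : Finset (Fin r)) :
    ∃ Z, Z ⊆ V ∧ (∀ u ∈ Z, ∀ v ∈ Z, u ≠ v → F u v ∈ S) ∧ gg F V S = Z.card := by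
  classical
  have hne : (V.powerset.filter
      fun Z => ∀ u ∈ Z, ∀ v ∈ Z, u ≠ v → F u v ∈ S).Nonempty := by
    refine ⟨∅, ?_⟩
    simp
  obtain ⟨Z, hZ, hval⟩ := Finset.exists_mem_eq_sup _ hne Finset.card
  simp only [Finset.mem_filter, Finset.mem_powerset] at hZ
  exact ⟨Z, hZ.1, hZ.2, hval⟩

lemma one_le_gg {m r : ℕ} (F : Fin m → Fin m → Fin r) {V : Finset (Fin m)}
    (S : Finset (Fin r)) (hV : V.Nonempty) : 1 ≤ gg F V S := by
  obtain ⟨v, hv⟩ := hV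
  have := le_gg F (Z := {v}) (S := S) (by simpa using hv)
    (by intro u hu w hw huw; simp at hu hw; simp [hu, hw] at huw)
  simpa using this

lemma gg_mono {m r : ℕ} (F : Fin m → Fin m → Fin r) {U V : Finset (Fin m)}
    (S : Finset (Fin r)) (hUV : U ⊆ V) : gg F U S ≤ gg F V S := by
  obtain ⟨Z, hZU, hZ, hval⟩ := gg_witness F U S
  rw [hval]
  exact le_gg F (hZU.trans hUV) hZ

lemma gg_superadd {m r : ℕ} (F : Fin m → Fin m → Fin r)
    (hsym : ∀ u v, F u v = F v u) {V U : Finset (Fin m)} {S : Finset (Fin r)}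
    {a b : Fin r} (hUV : U ⊆ V) (ha : a ∈ S) (hb : b ∈ S)
    (hcross : ∀ u ∈ U, ∀ w ∈ V \ U, F u w = a ∨ F u w = b) :
    gg F U S + gg F (V \ U) S ≤ gg F V S := by
  classical
  obtain ⟨Z1, hZ1U, hZ1, hval1⟩ := gg_witness F U S
  obtain ⟨Z2, hZ2W, hZ2, hval2⟩ := gg_witness F (V \ U) S
  rw [hval1, hval2]
  have hdisj : Disjoint Z1 Z2 := by
    have : Disjoint U (V \ U) := Finset.disjoint_sdiff
    exact this.mono hZ1U hZ2W
  rw [← Finset.card_union_of_disjoint hdisj]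
  apply le_gg F
  · intro x hx
    rcases Finset.mem_union.1 hx with h | h
    · exact hUV (hZ1U h)
    · exact (Finset.mem_sdiff.1 (hZ2W h)).1
  · intro u hu v hv huv
    rcases Finset.mem_union.1 hu with hu1 | hu2 <;> rcases Finset.mem_union.1 hv with hv1 | hv2
    · exact hZ1 u hu1 v hv1 huv
    · rcases hcross u (hZ1U hu1) v (hZ2W hv2) with h | h <;> rw [h] <;> assumption
    · rcases hcross v (hZ1U hv1) u (hZ2W hu2) with h | h <;>
        rw [hsym u v, h] <;> assumption
    · exact hZ2 u hu2 v hv2 huv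

lemma card_pair_filter {r s : ℕ} (hs : 2 ≤ s) {a b : Fin r} (hab : a ≠ b) :
    ((Finset.powersetCard s (Finset.univ : Finset (Fin r))).filter
      (fun S => a ∈ S ∧ b ∈ S)).card = (r - 2).choose (s - 2) := by
  classical
  have key : ((Finset.powersetCard s (Finset.univ : Finset (Fin r))).filter
      (fun S => a ∈ S ∧ b ∈ S)).card
      = (Finset.powersetCard (s - 2) ((Finset.univ.erase a).erase b)).card := by
    refine Finset.card_bij' (fun S _ => (S.erase a).erase b)
      (fun T _ => insert a (insert b T)) ?hi ?hj ?left ?right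
    case hi =>
      intro S hS
      simp only [Finset.mem_filter, Finset.mem_powersetCard_univ] at hS
      obtain ⟨hcard, haS, hbS⟩ := hS
      rw [Finset.mem_powersetCard]
      constructor
      · exact Finset.erase_subset_erase b
          (Finset.erase_subset_erase a (Finset.subset_univ S))
      · rw [Finset.card_erase_of_mem (Finset.mem_erase.2 ⟨hab.symm, hbS⟩),
          Finset.card_erase_of_mem haS, hcard]
        omega
    case hj =>
      intro T hT
      rw [Finset.mem_powersetCard] at hT
      obtain ⟨hsub, hcard⟩ := hT
      have hbT : b ∉ T := fun h => (Finset.mem_erase.1 (hsub h)).1 rfl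
      have haT : a ∉ T := fun h =>
        (Finset.mem_erase.1 (Finset.mem_of_mem_erase (hsub h))).1 rfl
      have haiT : a ∉ insert b T := by
        simp only [Finset.mem_insert]
        rintro (h | h)
        · exact hab h
        · exact haT h
      simp only [Finset.mem_filter, Finset.mem_powersetCard_univ]
      refine ⟨?_, Finset.mem_insert_self _ _,
        Finset.mem_insert.2 (Or.inr (Finset.mem_insert_self _ _))⟩
      rw [Finset.card_insert_of_notMem haiT, Finset.card_insert_of_notMem hbT,
        hcard]
      omega
    case left =>
      intro S hS
      simp only [Finset.mem_filter, Finset.mem_powersetCard_univ] at hS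
      obtain ⟨hcard, haS, hbS⟩ := hS
      show insert a (insert b ((S.erase a).erase b)) = S
      rw [Finset.insert_erase (Finset.mem_erase.2 ⟨hab.symm, hbS⟩),
        Finset.insert_erase haS]
    case right =>
      intro T hT
      rw [Finset.mem_powersetCard] at hT
      obtain ⟨hsub, hcard⟩ := hT
      have hbT : b ∉ T := fun h => (Finset.mem_erase.1 (hsub h)).1 rfl
      have haT : a ∉ T := fun h =>
        (Finset.mem_erase.1 (Finset.mem_of_mem_erase (hsub h))).1 rfl
      have haiT : a ∉ insert b T := by
        simp only [Finset.mem_insert]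
        rintro (h | h)
        · exact hab h
        · exact haT h
      show ((insert a (insert b T)).erase a).erase b = T
      rw [Finset.erase_insert haiT, Finset.erase_insert hbT]
  have hcc : ((Finset.univ.erase a).erase b).card = r - 2 := by
    rw [Finset.card_erase_of_mem (Finset.mem_erase.2 ⟨hab.symm, Finset.mem_univ b⟩),
      Finset.card_erase_of_mem (Finset.mem_univ a), Finset.card_univ,
      Fintype.card_fin]
    omega
  rw [key, Finset.card_powersetCard, hcc]

theorem gallai_main_aux {n r : ℕ} {F : Fin n → Fin n → Fin r} (s : ℕ)
    (hs : 2 ≤ s) (hsr : s ≤ r)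
    (hsym : ∀ u v, F u v = F v u) (hG : IsRainbowFree F) :
    ∀ (N : ℕ) (V : Finset (Fin n)), V.card ≤ N →
      V.card ^ ((r - 2).choose (s - 2)) ≤
        ∏ S ∈ Finset.powersetCard s (Finset.univ : Finset (Fin r)), gg F V S := by
  classical
  have hK : 1 ≤ (r - 2).choose (s - 2) := Nat.choose_pos (by omega)
  intro N
  induction N with
  | zero =>
    intro V hV
    have h0 : V.card = 0 := by omega
    rw [h0, zero_pow (by omega)]
    exact Nat.zero_le _
  | succ N ih =>
    intro V hVN
    by_cases hV2 : 2 ≤ V.card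
    · obtain ⟨a, b, hab, U, hUne, hUss, hcross⟩ :=
        gallai_BW hsym hG (le_trans hs hsr) V.card V le_rfl hV2
      have hUV : U ⊆ V := hUss.subset
      have hWne : (V \ U).Nonempty := by
        obtain ⟨x, hxV, hxU⟩ := (Finset.ssubset_iff_of_subset hUV).1 hUss
        exact ⟨x, Finset.mem_sdiff.2 ⟨hxV, hxU⟩⟩
      have hUcard : U.card < V.card := Finset.card_lt_card hUss
      have hWcard : (V \ U).card = V.card - U.card := Finset.card_sdiff_of_subset hUV
      have hU1 : 1 ≤ U.card := Finset.card_pos.2 hUne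
      have ihU := ih U (by omega)
      have ihW := ih (V \ U) (by omega)
      have hmain := core_numeric (Finset.powersetCard s (Finset.univ : Finset (Fin r)))
        ((Finset.powersetCard s (Finset.univ : Finset (Fin r))).filter
          (fun S => a ∈ S ∧ b ∈ S))
        (Finset.filter_subset _ _) ((r - 2).choose (s - 2)) U.card (V \ U).card hK
        (card_pair_filter hs hab) (fun S => gg F U S) (fun S => gg F (V \ U) S)
        (fun S => gg F V S)
        (fun S _ => one_le_gg F S hUne) (fun S _ => one_le_gg F S hWne)
        (fun S hS => by
          simp only [Finset.mem_filter] at hS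
          exact gg_superadd F hsym hUV hS.2.1 hS.2.2 hcross)
        (fun S _ _ => gg_mono F S hUV)
        (fun S _ _ => gg_mono F S Finset.sdiff_subset)
        ihU ihW
      have hsum : U.card + (V \ U).card = V.card := by omega
      rw [hsum] at hmain
      exact hmain
    · by_cases hV0 : V.card = 0
      · rw [hV0, zero_pow (by omega)]
        exact Nat.zero_le _
      · have h1 : V.card = 1 := by omega
        rw [h1, one_pow]
        apply Finset.one_le_prod'
        intro S _
        exact one_le_gg F S (Finset.card_pos.1 (by omega))

theorem gallai_general_product (r s n : ℕ) (hs : 2 ≤ s) (hsr : s ≤ r)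
    (F : Fin n → Fin n → Fin r)
    (hsym : ∀ u v, F u v = F v u) (hG : IsRainbowFree F) :
    n ^ ((r - 2).choose (s - 2)) ≤
      ∏ S ∈ Finset.powersetCard s (Finset.univ : Finset (Fin r)), maxSub F S := by
  have h := gallai_main_aux s hs hsr hsym hG
    (Finset.univ : Finset (Fin n)).card (Finset.univ : Finset (Fin n)) le_rfl
  rw [Finset.card_univ, Fintype.card_fin] at h
  calc n ^ ((r - 2).choose (s - 2))
      ≤ ∏ S ∈ Finset.powersetCard s (Finset.univ : Finset (Fin r)),
          gg F Finset.univ S := h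
    _ = ∏ S ∈ Finset.powersetCard s (Finset.univ : Finset (Fin r)), maxSub F S :=
        Finset.prod_congr rfl (fun S _ => (maxSub_eq_gg F S).symm)
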